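/- Let q = 2^m with m odd, and n_0 = |{x ∈ GF(q) : Tr(x^3 + x) = 0}|. Then n_0 = 2^{m-1} + (-1)^{(m²-1)/8} · 2^{(m-1)/2}. -/

import Mathlib

set_option linter.unusedSectionVars false
set_option maxHeartbeats 4000000

open Finset WeierstrassCurve

namespace Stmt10Aux

private lemma ite_mul_aux (u v : ZMod 2) :
    (if u + v = 0 then (1:ℤ) else -1) = (if u = 0 then 1 else -1) * (if v = 0 then 1 else -1) := by
  fin_cases u <;> fin_cases v <;> decide

variable {F : Type} [Field F] [Fintype F] [DecidableEq F] [Algebra (ZMod 2) F]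

noncomputable def chi (F : Type) [Field F] [Fintype F] [Algebra (ZMod 2) F] (x : F) : ℤ :=
  if Algebra.trace (ZMod 2) F x = 0 then 1 else -1

theorem charF : CharP F 2 := charP_of_injective_ringHom (algebraMap (ZMod 2) F).injective 2

theorem two_eq_zero : (2 : F) = 0 := by
  haveI := charF (F := F); exact CharTwo.two_eq_zero

theorem chi_add (a b : F) : chi F (a + b) = chi F a * chi F b := by
  unfold chi
  rw [map_add]
  exact ite_mul_aux _ _

theorem chi_zero : chi F 0 = 1 := by simp [chi]

theorem trace_sq (x : F) : Algebra.trace (ZMod 2) F (x ^ 2) = Algebra.trace (ZMod 2) F x := by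
  haveI := charF (F := F)
  haveI : ExpChar F 2 := ExpChar.prime Nat.prime_two
  let e : F ≃ₐ[ZMod 2] F :=
    AlgEquiv.ofRingEquiv (f := frobeniusEquiv F 2) (fun c => by
      show (algebraMap (ZMod 2) F c) ^ 2 = algebraMap (ZMod 2) F c
      rw [← map_pow]
      congr 1
      revert c; decide)
  have := Algebra.trace_eq_of_algEquiv e x
  simpa [e, frobeniusEquiv_def, frobenius_def] using this

theorem chi_sq (x : F) : chi F (x ^ 2) = chi F x := by unfold chi; rw [trace_sq]

theorem sum_chi_mul {c : F} (hc : c ≠ 0) : ∑ x : F, chi F (c * x) = 0 := by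
  obtain ⟨y, hy⟩ : ∃ y : F, Algebra.trace (ZMod 2) F y ≠ 0 := by
    by_contra h
    push_neg at h
    exact Algebra.trace_ne_zero (ZMod 2) F (by ext z; simpa using h z)
  set x₀ := c⁻¹ * y with hx₀
  have hcx₀ : c * x₀ = y := by rw [hx₀, ← mul_assoc, mul_inv_cancel₀ hc, one_mul]
  have key : ∑ x : F, chi F (c * x) = ∑ x : F, chi F (c * (x₀ + x)) :=
    (Fintype.sum_equiv (Equiv.addLeft x₀) _ _ (fun x => rfl)).symm
  have h2 : ∀ x : F, chi F (c * (x₀ + x)) = - chi F (c * x) := by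
    intro x
    rw [mul_add, chi_add, hcx₀]
    have : chi F y = -1 := by simp [chi, hy]
    rw [this]; ring
  have : ∑ x : F, chi F (c * x) = - ∑ x : F, chi F (c * x) := by
    nth_rewrite 1 [key]
    rw [Finset.sum_congr rfl (fun x _ => h2 x), Finset.sum_neg_distrib]
  linarith



theorem chi_def (x : F) : chi F x = if Algebra.trace (ZMod 2) F x = 0 then 1 else -1 := rfl

theorem neg_eq (a : F) : -a = a := by
  haveI := charF (F := F); exact CharTwo.neg_eq a

theorem cube_inj {m : ℕ} (hm : Odd m) (hcard : Fintype.card F = 2 ^ m) :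
    Function.Injective (fun x : F => x ^ 3) := by
  have hcop : (Nat.card Fˣ).Coprime 3 := by
    rw [Nat.card_eq_fintype_card, Fintype.card_units, hcard]
    obtain ⟨k, rfl⟩ := hm
    have h4 : 4 ^ k % 3 = 1 := by
      have := Nat.ModEq.pow k (show 4 ≡ 1 [MOD 3] by decide)
      simpa [Nat.ModEq] using this
    have h5 : 2 ^ (2 * k + 1) = 2 * 4 ^ k := by
      rw [pow_succ, pow_mul]; ring
    rw [Nat.coprime_comm, Nat.Prime.coprime_iff_not_dvd Nat.prime_three, h5]
    omega
  intro x y h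
  simp only at h
  rcases eq_or_ne x 0 with rfl | hx
  · have hy3 : y ^ 3 = 0 := by rw [← h]; simp
    exact (pow_eq_zero_iff (n := 3) (by norm_num) |>.mp hy3).symm
  rcases eq_or_ne y 0 with rfl | hy
  · have hx3 : x ^ 3 = 0 := by rw [h]; simp
    exact absurd (pow_eq_zero_iff (n := 3) (by norm_num) |>.mp hx3) hx
  have : (Units.mk0 x hx) ^ 3 = (Units.mk0 y hy) ^ 3 := by
    ext; simp [h]
  have := (powCoprime hcop).injective (a₁ := Units.mk0 x hx) (a₂ := Units.mk0 y hy) this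
  simpa [Units.ext_iff] using this

theorem exists_sqrt (t : F) : ∃ s : F, s ^ 2 = t := by
  haveI := charF (F := F)
  haveI : ExpChar F 2 := ExpChar.prime Nat.prime_two
  exact ⟨(frobeniusEquiv F 2).symm t, by
    have := frobenius_apply_frobeniusEquiv_symm (R := F) (p := 2) t
    rwa [frobenius_def] at this⟩

theorem inner_sum {m : ℕ} (hm : Odd m) (hcard : Fintype.card F = 2 ^ m) (t : F) :
    ∑ x : F, chi F (x ^ 2 * t + x * t ^ 2) = if t = 0 ∨ t = 1 then ((2:ℤ) ^ m) else 0 := by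
  obtain ⟨s, hs⟩ := exists_sqrt t
  have hx : ∀ x : F, chi F (x ^ 2 * t + x * t ^ 2) = chi F ((s + t ^ 2) * x) := by
    intro x
    have h1 : x ^ 2 * t = (x * s) ^ 2 := by rw [mul_pow, hs]
    have h2 : (s + t ^ 2) * x = x * s + x * t ^ 2 := by ring
    rw [h1, h2, chi_add, chi_add, chi_sq]
  rw [Finset.sum_congr rfl (fun x _ => hx x)]
  by_cases hc : s + t ^ 2 = 0
  · have hst : s = t ^ 2 := by
      have := neg_eq (t ^ 2 : F); linear_combination hc + this
    have ht4 : t ^ 4 = t := by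
      calc t ^ 4 = (t ^ 2) ^ 2 := by ring
      _ = s ^ 2 := by rw [hst]
      _ = t := hs
    have ht : t = 0 ∨ t = 1 := by
      rcases eq_or_ne t 0 with rfl | ht0
      · left; rfl
      · right
        have h3 : t * t ^ 3 = t * 1 ^ 3 := by linear_combination ht4
        exact cube_inj hm hcard (mul_left_cancel₀ ht0 h3)
    simp only [hc, zero_mul, chi_zero, ht, if_true, Finset.sum_const, Finset.card_univ, hcard]
    push_cast
    ring
  · rw [sum_chi_mul hc]
    have ht : ¬(t = 0 ∨ t = 1) := by
      rintro (rfl | rfl)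
      · apply hc
        have : s = 0 := by
          have := pow_eq_zero_iff (n := 2) (by norm_num) |>.mp (by rw [hs])
          exact this
        rw [this]; ring
      · apply hc
        have hs1 : s = 1 := by
          have : (s + 1) ^ 2 = 0 := by
            have h2 := two_eq_zero (F := F)
            linear_combination hs + (s + 1) * h2
          have := pow_eq_zero_iff (n := 2) (by norm_num) |>.mp this
          linear_combination this + neg_eq (1 : F)
        rw [hs1, one_pow, one_add_one_eq_two]
        exact two_eq_zero
    simp [ht]

theorem S_sq {m : ℕ} (hm : Odd m) (hcard : Fintype.card F = 2 ^ m) :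
    (∑ x : F, chi F (x ^ 3 + x)) ^ 2 = 2 ^ (m + 1) := by
  have key : (∑ x : F, chi F (x ^ 3 + x)) ^ 2
      = ∑ x : F, ∑ t : F, chi F (t ^ 3 + t) * chi F (x ^ 2 * t + x * t ^ 2) := by
    rw [sq, Finset.sum_mul_sum]
    refine Finset.sum_congr rfl fun x _ => ?_
    rw [show ∑ y : F, chi F (x ^ 3 + x) * chi F (y ^ 3 + y)
        = ∑ t : F, chi F (x ^ 3 + x) * chi F ((x + t) ^ 3 + (x + t)) from
      (Fintype.sum_equiv (Equiv.addLeft x) _ _ (fun t => rfl)).symm]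
    refine Finset.sum_congr rfl fun t _ => ?_
    rw [← chi_add, ← chi_add]
    congr 1
    linear_combination (x ^ 3 + x ^ 2 * t + x * t ^ 2 + x) * two_eq_zero (F := F)
  rw [key, Finset.sum_comm]
  have : ∀ t : F, ∑ x : F, chi F (t ^ 3 + t) * chi F (x ^ 2 * t + x * t ^ 2)
      = chi F (t ^ 3 + t) * (if t = 0 ∨ t = 1 then ((2:ℤ) ^ m) else 0) := by
    intro t
    rw [← Finset.mul_sum, inner_sum hm hcard]
  rw [Finset.sum_congr rfl (fun t _ => this t)]
  rw [← Finset.sum_subset (Finset.subset_univ ({0, 1} : Finset F))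
    (by
      intro t _ ht
      simp only [Finset.mem_insert, Finset.mem_singleton] at ht
      rw [if_neg (by tauto)]
      ring)]
  rw [Finset.sum_pair (zero_ne_one (α := F))]
  have e0 : (0:F) ^ 3 + 0 = 0 := by ring
  have e1 : (1:F) ^ 3 + 1 = 0 := by rw [one_pow, one_add_one_eq_two]; exact two_eq_zero
  rw [e0, e1, chi_zero, if_pos (Or.inl rfl), if_pos (Or.inr rfl)]
  ring


theorem sum_chi : ∑ x : F, chi F x = 0 := by
  have := sum_chi_mul (c := (1:F)) one_ne_zero
  simpa using this

theorem card_K : 2 * ((univ.filter fun c : F => Algebra.trace (ZMod 2) F c = 0).card : ℤ)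
    = Fintype.card F := by
  have h := sum_chi (F := F)
  rw [show ∑ x : F, chi F x
      = ∑ x : F, (if Algebra.trace (ZMod 2) F x = 0 then (1:ℤ) else -1) from
    Finset.sum_congr rfl fun x _ => chi_def x] at h
  rw [Finset.sum_ite, Finset.sum_const, Finset.sum_const] at h
  have hsplit : (univ.filter fun c : F => Algebra.trace (ZMod 2) F c = 0).card
      + (univ.filter fun c : F => ¬ Algebra.trace (ZMod 2) F c = 0).card = Fintype.card F := by
    rw [Finset.card_filter_add_card_filter_not]
    rfl
  simp only [nsmul_eq_mul, mul_one, mul_neg] at h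
  push_cast [← hsplit]
  omega

theorem trace_AS (y : F) : Algebra.trace (ZMod 2) F (y ^ 2 + y) = 0 := by
  rw [map_add, trace_sq]
  have : ∀ u : ZMod 2, u + u = 0 := by decide
  exact this _

theorem AS_count {m : ℕ} (hcard : Fintype.card F = 2 ^ m) (c : F) :
    ((univ.filter fun y : F => y ^ 2 + y = c).card : ℤ)
      = if Algebra.trace (ZMod 2) F c = 0 then 2 else 0 := by
  set A : Finset F := univ.image (fun y : F => y ^ 2 + y) with hA
  set K : Finset F := univ.filter (fun c : F => Algebra.trace (ZMod 2) F c = 0) with hK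
  have fiber2 : ∀ c ∈ A, (univ.filter fun y : F => y ^ 2 + y = c).card = 2 := by
    intro c hc
    obtain ⟨y₀, -, hy₀⟩ := Finset.mem_image.mp hc
    have : (univ.filter fun y : F => y ^ 2 + y = c) = {y₀, y₀ + 1} := by
      ext y
      simp only [Finset.mem_filter, Finset.mem_univ, true_and, Finset.mem_insert,
        Finset.mem_singleton]
      constructor
      · intro hy
        have hz : (y + y₀) * (y + y₀ + 1) = 0 := by
          have h2 := two_eq_zero (F := F)
          linear_combination hy - hy₀ + (y₀ ^ 2 + y₀ + y * y₀) * h2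
        rcases mul_eq_zero.mp hz with h | h
        · left
          have h2 := two_eq_zero (F := F)
          linear_combination h - y₀ * h2
        · right
          have h2 := two_eq_zero (F := F)
          linear_combination h - (y₀ + 1) * h2
      · rintro (rfl | rfl)
        · exact hy₀
        · have h2 := two_eq_zero (F := F)
          linear_combination hy₀ + (y₀ + 1) * h2
    rw [this, Finset.card_insert_of_notMem (by
        simp only [Finset.mem_singleton]
        intro h
        have : (1 : F) = 0 := by linear_combination - h
        exact one_ne_zero this), Finset.card_singleton]
  have hq : (Fintype.card F : ℤ) = 2 * A.card := by
    have := Finset.card_eq_sum_card_fiberwise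
      (f := fun y : F => y ^ 2 + y) (s := univ) (t := A)
      (fun x _ => Finset.mem_image_of_mem _ (Finset.mem_univ x))
    rw [Finset.card_univ] at this
    have h2 : ∑ b ∈ A, (univ.filter fun a : F => (fun y : F => y ^ 2 + y) a = b).card
        = ∑ _b ∈ A, 2 := Finset.sum_congr rfl (fun c hc => fiber2 c hc)
    rw [this, h2, Finset.sum_const, smul_eq_mul]
    push_cast
    ring
  have hAK : A ⊆ K := by
    intro c hc
    obtain ⟨y, -, rfl⟩ := Finset.mem_image.mp hc
    simp only [hK, Finset.mem_filter, Finset.mem_univ, true_and]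
    exact trace_AS y
  have hKcard : 2 * (K.card : ℤ) = Fintype.card F := card_K
  have hAeqK : A = K := by
    apply Finset.eq_of_subset_of_card_le hAK
    omega
  by_cases htr : Algebra.trace (ZMod 2) F c = 0
  · rw [if_pos htr]
    have hcK : c ∈ K := by simp [hK, htr]
    rw [← hAeqK] at hcK
    rw [fiber2 c hcK]
    norm_num
  · rw [if_neg htr]
    have hcA : c ∉ A := by
      rw [hAeqK]
      simp [hK, htr]
    have : (univ.filter fun y : F => y ^ 2 + y = c) = ∅ := by
      rw [Finset.filter_eq_empty_iff]
      intro y _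
      intro hy
      exact hcA (Finset.mem_image.mpr ⟨y, Finset.mem_univ y, hy⟩)
    rw [this]
    simp


/-- the curve y^2 + y = x^3 + x -/
def W (F : Type) [Field F] : WeierstrassCurve.Affine F := ⟨0, 0, 1, 1, 0⟩

lemma Wa1 : (W F).a₁ = 0 := rfl
lemma Wa2 : (W F).a₂ = 0 := rfl
lemma Wa3 : (W F).a₃ = 1 := rfl
lemma Wa4 : (W F).a₄ = 1 := rfl
lemma Wa6 : (W F).a₆ = 0 := rfl

lemma W_equation_iff (x y : F) : (W F).Equation x y ↔ y ^ 2 + y = x ^ 3 + x := by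
  rw [WeierstrassCurve.Affine.equation_iff, Wa1, Wa2, Wa3, Wa4, Wa6]
  constructor <;> intro h <;> linear_combination h

lemma W_Δ : (W F).Δ ≠ 0 := by
  rw [WeierstrassCurve.Δ, WeierstrassCurve.b₂, WeierstrassCurve.b₄, WeierstrassCurve.b₆,
    WeierstrassCurve.b₈, Wa1, Wa2, Wa3, Wa4, Wa6]
  have h2 := two_eq_zero (F := F)
  intro h
  have : (1 : F) = 0 := by linear_combination -h - 45 * h2
  exact one_ne_zero this

lemma W_nonsingular {x y : F} (h : (W F).Equation x y) : (W F).Nonsingular x y :=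
  (WeierstrassCurve.Affine.equation_iff_nonsingular_of_Δ_ne_zero (W := W F) W_Δ).mp h

lemma hns00 : (W F).Nonsingular 0 0 := W_nonsingular (by rw [W_equation_iff]; ring)
lemma hns10 : (W F).Nonsingular 1 0 := W_nonsingular (by
  rw [W_equation_iff]; linear_combination - two_eq_zero (F := F))
lemma hns11 : (W F).Nonsingular 1 1 := W_nonsingular (by
  rw [W_equation_iff]; ring)
lemma hns01 : (W F).Nonsingular 0 1 := W_nonsingular (by
  rw [W_equation_iff]; linear_combination two_eq_zero (F := F))

lemma some_eq {W' : WeierstrassCurve.Affine F} {x y x' y' : F} (hx : x' = x) (hy : y' = y)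
    (h : W'.Nonsingular x' y') (h' : W'.Nonsingular x y) :
    WeierstrassCurve.Affine.Point.some _ _ h = WeierstrassCurve.Affine.Point.some _ _ h' := by
  subst hx; subst hy; rfl

lemma negY00 : (W F).negY 0 0 = 1 := by
  rw [WeierstrassCurve.Affine.negY, Wa1, Wa3]; ring_nf; exact neg_eq 1

lemma hP2 : (WeierstrassCurve.Affine.Point.some _ _ (hns00 (F := F)))
      + .some _ _ (hns00 (F := F)) = .some _ _ (hns10 (F := F)) := by
  have hy : (0 : F) ≠ (W F).negY 0 0 := by rw [negY00]; exact zero_ne_one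
  rw [WeierstrassCurve.Affine.Point.add_self_of_Y_ne hy]
  have h2 := two_eq_zero (F := F)
  have hslope : (W F).slope 0 0 0 0 = 1 := by
    rw [WeierstrassCurve.Affine.slope_of_Y_ne rfl hy, negY00, Wa1, Wa2, Wa4]
    rw [show (0:F) - 1 = 1 by linear_combination neg_eq (1:F)]
    field_simp
    ring
  apply some_eq
  · rw [WeierstrassCurve.Affine.addX, hslope, Wa1, Wa2]; ring
  · rw [WeierstrassCurve.Affine.addY, WeierstrassCurve.Affine.negAddY,
      WeierstrassCurve.Affine.addX, WeierstrassCurve.Affine.negY, hslope, Wa1, Wa2, Wa3]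
    linear_combination -h2


lemma hP3 : (WeierstrassCurve.Affine.Point.some _ _ (hns10 (F := F)))
      + .some _ _ (hns00 (F := F)) = .some _ _ (hns11 (F := F)) := by
  have hx : (1 : F) ≠ 0 := one_ne_zero
  rw [WeierstrassCurve.Affine.Point.add_of_X_ne hx]
  have h2 := two_eq_zero (F := F)
  have hslope : (W F).slope 1 0 0 0 = 0 := by
    rw [WeierstrassCurve.Affine.slope_of_X_ne hx]
    norm_num
  apply some_eq
  · rw [WeierstrassCurve.Affine.addX, hslope, Wa1, Wa2]
    linear_combination -h2
  · rw [WeierstrassCurve.Affine.addY, WeierstrassCurve.Affine.negAddY,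
      WeierstrassCurve.Affine.addX, WeierstrassCurve.Affine.negY, hslope, Wa1, Wa2, Wa3]
    linear_combination -h2

lemma hP4 : (WeierstrassCurve.Affine.Point.some _ _ (hns11 (F := F)))
      + .some _ _ (hns00 (F := F)) = .some _ _ (hns01 (F := F)) := by
  have hx : (1 : F) ≠ 0 := one_ne_zero
  rw [WeierstrassCurve.Affine.Point.add_of_X_ne hx]
  have h2 := two_eq_zero (F := F)
  have hslope : (W F).slope 1 0 1 0 = 1 := by
    rw [WeierstrassCurve.Affine.slope_of_X_ne hx]
    norm_num
  apply some_eq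
  · rw [WeierstrassCurve.Affine.addX, hslope, Wa1, Wa2]
    ring
  · rw [WeierstrassCurve.Affine.addY, WeierstrassCurve.Affine.negAddY,
      WeierstrassCurve.Affine.addX, WeierstrassCurve.Affine.negY, hslope, Wa1, Wa2, Wa3]
    linear_combination -h2

lemma hP5 : (WeierstrassCurve.Affine.Point.some _ _ (hns01 (F := F)))
      + .some _ _ (hns00 (F := F)) = 0 :=
  WeierstrassCurve.Affine.Point.add_of_Y_eq rfl negY00.symm

lemma hfive : (5 : ℕ) • (WeierstrassCurve.Affine.Point.some _ _ (hns00 (F := F))) = 0 := by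
  have : (5 : ℕ) • (WeierstrassCurve.Affine.Point.some _ _ (hns00 (F := F)))
      = .some _ _ (hns00 (F := F)) + .some _ _ (hns00 (F := F)) + .some _ _ (hns00 (F := F))
        + .some _ _ (hns00 (F := F)) + .some _ _ (hns00 (F := F)) := by abel
  rw [this, hP2, hP3, hP4, hP5]

/-- the points equiv -/
noncomputable def ptEquiv : (W F).Point ≃ Option {p : F × F // p.2 ^ 2 + p.2 = p.1 ^ 3 + p.1} where
  toFun P := match P with
    | .zero => none
    | @WeierstrassCurve.Affine.Point.some _ _ _ x y h =>
        some ⟨(x, y), (W_equation_iff x y).mp h.1⟩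
  invFun o := match o with
    | none => .zero
    | some ⟨(x, y), h⟩ => .some _ _ (W_nonsingular ((W_equation_iff x y).mpr h))
  left_inv P := by cases P <;> rfl
  right_inv o := by rcases o with - | ⟨⟨x, y⟩, h⟩ <;> rfl

noncomputable instance : Fintype (W F).Point := Fintype.ofEquiv _ (ptEquiv (F := F)).symm

lemma card_points : (Fintype.card (W F).Point : ℤ)
    = 1 + ∑ x : F, ((univ.filter fun y : F => y ^ 2 + y = x ^ 3 + x).card : ℤ) := by
  rw [Fintype.card_congr (ptEquiv (F := F)), Fintype.card_option]
  have e2 : {p : F × F // p.2 ^ 2 + p.2 = p.1 ^ 3 + p.1}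
      ≃ Σ x : F, {y : F // y ^ 2 + y = x ^ 3 + x} :=
    { toFun := fun ⟨⟨x, y⟩, h⟩ => ⟨x, ⟨y, h⟩⟩
      invFun := fun ⟨x, ⟨y, h⟩⟩ => ⟨⟨x, y⟩, h⟩
      left_inv := fun ⟨⟨x, y⟩, h⟩ => rfl
      right_inv := fun ⟨x, ⟨y, h⟩⟩ => rfl }
  rw [Fintype.card_congr e2, Fintype.card_sigma]
  push_cast
  rw [add_comm]
  congr 1
  refine Finset.sum_congr rfl fun x _ => ?_
  rw [Fintype.card_subtype]

lemma five_dvd_card : (5 : ℤ) ∣ (Fintype.card (W F).Point : ℤ) := by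
  haveI : Fact (Nat.Prime 5) := ⟨by norm_num⟩
  have h1 : addOrderOf (WeierstrassCurve.Affine.Point.some _ _ (hns00 (F := F))) = 5 :=
    addOrderOf_eq_prime hfive
      (WeierstrassCurve.Affine.Point.some_ne_zero (hns00 (F := F)))
  have h2 := addOrderOf_dvd_card
    (x := WeierstrassCurve.Affine.Point.some _ _ (hns00 (F := F)))
  rw [h1] at h2
  exact_mod_cast h2


lemma mod5pow (n : ℕ) : (2:ℤ) ^ n % 5 = 2 ^ (n % 4) % 5 := by
  conv_lhs => rw [show n = 4 * (n / 4) + n % 4 from (Nat.div_add_mod n 4).symm]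
  rw [pow_add, pow_mul, Int.mul_emod]
  have h : ((2:ℤ) ^ 4) ^ (n / 4) % 5 = 1 := by
    have h := Int.ModEq.pow (n / 4) (show (2:ℤ) ^ 4 ≡ 1 [ZMOD 5] by decide)
    simpa [Int.ModEq] using h
  rw [h, one_mul, Int.emod_emod_of_dvd _ dvd_rfl]

lemma final_arith (m : ℕ) (hm : Odd m) (N : ℤ)
    (hsq : (2 * N - 2 ^ m) ^ 2 = 2 ^ (m + 1))
    (hdvd : (5:ℤ) ∣ (1 + 2 * N)) :
    N = 2 ^ (m - 1) + (-1 : ℤ) ^ ((m ^ 2 - 1) / 8) * 2 ^ ((m - 1) / 2) := by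
  obtain ⟨k, hk⟩ := hm
  -- factor the square
  have hpow : (2:ℤ) ^ (m + 1) = (2 ^ (k + 1)) ^ 2 := by
    rw [← pow_mul]; congr 1; omega
  have hfac : (2 * N - 2 ^ m - 2 ^ (k + 1)) * (2 * N - 2 ^ m + 2 ^ (k + 1)) = 0 := by
    linear_combination hsq + hpow
  have hm1 : m - 1 = 2 * k := by omega
  have hm2 : (m - 1) / 2 = k := by omega
  have p1 : (2:ℤ) ^ m = 2 * 2 ^ (2 * k) := by
    rw [hk, pow_succ]; ring
  have p2 : (2:ℤ) ^ (k + 1) = 2 * 2 ^ k := by rw [pow_succ]; ring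
  rw [hm2, hm1]
  -- residues
  have hr : m % 8 = 1 ∨ m % 8 = 3 ∨ m % 8 = 5 ∨ m % 8 = 7 := by omega
  have hsgn := mul_eq_zero.mp hfac
  rcases hr with hr | hr | hr | hr
  all_goals obtain ⟨j, hj⟩ : ∃ j, m = 8 * j + m % 8 := ⟨m / 8, by omega⟩
  all_goals rw [hr] at hj
  -- 2^m % 5 and 2^(k+1) % 5
  all_goals have hm5 : (2:ℤ) ^ m % 5 = 2 ^ (m % 4) % 5 := mod5pow m
  all_goals have hk5 : (2:ℤ) ^ (k + 1) % 5 = 2 ^ ((k + 1) % 4) % 5 := mod5pow (k + 1)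
  all_goals have hmsq : m ^ 2 = 64 * j ^ 2 + 16 * (m % 8) * j + (m % 8) ^ 2 := by rw [hr, hj]; ring
  all_goals rw [hr] at hmsq
  -- parity of (m^2-1)/8
  · -- m ≡ 1 mod 8
    have hpar : (m ^ 2 - 1) / 8 % 2 = 0 := by omega
    have hsig : (-1 : ℤ) ^ ((m ^ 2 - 1) / 8) = 1 :=
      Even.neg_one_pow ⟨(m ^ 2 - 1) / 8 / 2, by omega⟩
    rw [hsig]
    have e1 : m % 4 = 1 := by omega
    have e2 : (k + 1) % 4 = 1 := by omega
    rw [e1] at hm5; rw [e2] at hk5; norm_num at hm5 hk5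
    rcases hsgn with h | h
    · linarith [p1, p2, h]
    · exfalso; omega
  · -- m ≡ 3 mod 8
    have hpar : (m ^ 2 - 1) / 8 % 2 = 1 := by omega
    have hsig : (-1 : ℤ) ^ ((m ^ 2 - 1) / 8) = -1 :=
      Odd.neg_one_pow ⟨(m ^ 2 - 1) / 8 / 2, by omega⟩
    rw [hsig]
    have e1 : m % 4 = 3 := by omega
    have e2 : (k + 1) % 4 = 2 := by omega
    rw [e1] at hm5; rw [e2] at hk5; norm_num at hm5 hk5
    rcases hsgn with h | h
    · exfalso; omega
    · linarith [p1, p2, h]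
  · -- m ≡ 5 mod 8
    have hpar : (m ^ 2 - 1) / 8 % 2 = 1 := by omega
    have hsig : (-1 : ℤ) ^ ((m ^ 2 - 1) / 8) = -1 :=
      Odd.neg_one_pow ⟨(m ^ 2 - 1) / 8 / 2, by omega⟩
    rw [hsig]
    have e1 : m % 4 = 1 := by omega
    have e2 : (k + 1) % 4 = 3 := by omega
    rw [e1] at hm5; rw [e2] at hk5; norm_num at hm5 hk5
    rcases hsgn with h | h
    · exfalso; omega
    · linarith [p1, p2, h]
  · -- m ≡ 7 mod 8
    have hpar : (m ^ 2 - 1) / 8 % 2 = 0 := by omega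
    have hsig : (-1 : ℤ) ^ ((m ^ 2 - 1) / 8) = 1 :=
      Even.neg_one_pow ⟨(m ^ 2 - 1) / 8 / 2, by omega⟩
    rw [hsig]
    have e1 : m % 4 = 3 := by omega
    have e2 : (k + 1) % 4 = 0 := by omega
    rw [e1] at hm5; rw [e2] at hk5; norm_num at hm5 hk5
    rcases hsgn with h | h
    · linarith [p1, p2, h]
    · exfalso; omega



end Stmt10Aux

open Finset

theorem stmt10 (m : ℕ) (hm : Odd m)
    (F : Type) [Field F] [Fintype F] [DecidableEq F] [Algebra (ZMod 2) F]
    (hcard : Fintype.card F = 2 ^ m) :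
    ((((univ : Finset F).filter
        fun x => Algebra.trace (ZMod 2) F (x ^ 3 + x) = 0).card : ℤ))
      = 2 ^ (m - 1) + (-1 : ℤ) ^ ((m ^ 2 - 1) / 8) * 2 ^ ((m - 1) / 2) := by
  classical
  set T := (univ : Finset F).filter
      (fun x => Algebra.trace (ZMod 2) F (x ^ 3 + x) = 0) with hT
  -- the character sum equals 2|T| - 2^m
  have hsplit : T.card + ((univ : Finset F).filter
      (fun x => ¬ Algebra.trace (ZMod 2) F (x ^ 3 + x) = 0)).card = 2 ^ m := by
    rw [hT, Finset.card_filter_add_card_filter_not, Finset.card_univ, hcard]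
  have hS : ∑ x : F, Stmt10Aux.chi F (x ^ 3 + x) = 2 * (T.card : ℤ) - 2 ^ m := by
    rw [show ∑ x : F, Stmt10Aux.chi F (x ^ 3 + x)
        = ∑ x : F, (if Algebra.trace (ZMod 2) F (x ^ 3 + x) = 0 then (1:ℤ) else -1) from
      Finset.sum_congr rfl fun x _ => Stmt10Aux.chi_def _]
    rw [Finset.sum_ite, Finset.sum_const, Finset.sum_const]
    simp only [nsmul_eq_mul, mul_one, mul_neg]
    rw [← hT]
    push_cast at hsplit ⊢
    linarith [hsplit]
  have hsq : (2 * (T.card : ℤ) - 2 ^ m) ^ 2 = 2 ^ (m + 1) := by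
    rw [← hS]
    exact Stmt10Aux.S_sq hm hcard
  -- the elliptic curve point count
  have hpts : (Fintype.card (Stmt10Aux.W F).Point : ℤ) = 1 + 2 * (T.card : ℤ) := by
    rw [Stmt10Aux.card_points]
    congr 1
    rw [show ∑ x : F, (((univ : Finset F).filter fun y : F => y ^ 2 + y = x ^ 3 + x).card : ℤ)
        = ∑ x : F, (if Algebra.trace (ZMod 2) F (x ^ 3 + x) = 0 then (2:ℤ) else 0) from
      Finset.sum_congr rfl fun x _ => Stmt10Aux.AS_count hcard (x ^ 3 + x)]
    rw [← Finset.sum_filter, ← hT, Finset.sum_const]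
    push_cast
    ring
  have hdvd : (5:ℤ) ∣ (1 + 2 * (T.card : ℤ)) := by
    rw [← hpts]
    exact Stmt10Aux.five_dvd_card
  exact Stmt10Aux.final_arith m hm _ hsq hdvd
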